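/- arXiv:2102.02962 — 3 statements merged into one kernel-verified Lean document; each statement's English description precedes it below -/
import Mathlib

section
/- (Gagliardo–Nirenberg inequality on ℝ.) Let 1 ≤ m, r and q be exponents with q ∈ [r, ∞) if m = 1 and q ∈ [r, ∞] if m > 1, and set θ = (1/r − 1/q)·(1/r − 1/m + 1)^{−1}. Then there exists a constant C > 0 depending only on q and r such that for every f ∈ W^{1,m}(ℝ) ∩ L^r(ℝ), ‖f‖_{L^q(ℝ)} ≤ C ‖f‖_{L^r(ℝ)}^{1−θ} ‖f'‖_{L^m(ℝ)}^{θ}. -/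
open MeasureTheory ENNReal

/-- If `f ∈ L^p(ℝ)` with `0 < p < ∞`, then `|f|` takes values below any `ε > 0`. -/
lemma gn_exists_abs_lt {f : ℝ → ℝ} {p : ℝ≥0∞} (hp0 : p ≠ 0) (hpt : p ≠ ∞)
    (hf : MemLp f p volume) {ε : ℝ} (hε : 0 < ε) : ∃ a, |f a| < ε := by
  by_contra hcon
  push_neg at hcon
  have hpt0 : 0 < p.toReal := ENNReal.toReal_pos hp0 hpt
  have hlow : ∫⁻ x, (‖f x‖₊ : ℝ≥0∞) ^ p.toReal ∂volume = ∞ := by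
    rw [eq_top_iff]
    calc (⊤ : ℝ≥0∞) = ENNReal.ofReal ε ^ p.toReal * volume (Set.univ : Set ℝ) := by
          rw [Real.volume_univ, ENNReal.mul_top]
          exact (ENNReal.rpow_pos (ENNReal.ofReal_pos.2 hε) ENNReal.ofReal_ne_top).ne'
      _ = ∫⁻ _, ENNReal.ofReal ε ^ p.toReal ∂volume := (lintegral_const _).symm
      _ ≤ _ := by
          refine lintegral_mono fun x => ?_
          gcongr
          rw [← enorm_eq_nnnorm, ← ofReal_norm, Real.norm_eq_abs]
          exact ENNReal.ofReal_le_ofReal (hcon x)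
  have := hf.2
  rw [eLpNorm_eq_lintegral_rpow_enorm_toReal hp0 hpt] at this
  simp only [enorm_eq_nnnorm] at this
  rw [hlow] at this
  rw [one_div, ENNReal.top_rpow_of_pos (by positivity : 0 < p.toReal⁻¹)] at this
  exact absurd this (lt_irrefl _)

/-- Interpolation: `‖f‖_q ≤ ‖f‖_∞^(1 - r/q) ‖f‖_r^(r/q)` for `r ≤ q`. -/
lemma gn_interp {f : ℝ → ℝ} {r : ℝ} (hr : 0 < r) {q : ℝ≥0∞}
    (hrq : ENNReal.ofReal r ≤ q) (hS : eLpNormEssSup f volume ≠ ∞) :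
    eLpNorm f q volume ≤
      eLpNormEssSup f volume ^ (1 - r * (1/q).toReal) *
        eLpNorm f (ENNReal.ofReal r) volume ^ (r * (1/q).toReal) := by
  set S := eLpNormEssSup f volume with hSdef
  rcases eq_or_ne q ∞ with hq | hq
  · simp [hq, eLpNorm_exponent_top]; exact le_rfl
  · have hq0 : q ≠ 0 := (lt_of_lt_of_le (ENNReal.ofReal_pos.2 hr) hrq).ne'
    have hqt : 0 < q.toReal := ENNReal.toReal_pos hq0 hq
    have hrqt : r ≤ q.toReal := by
      have := ENNReal.toReal_mono hq hrq
      rwa [ENNReal.toReal_ofReal hr.le] at this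
    have htq : (1/q).toReal = 1 / q.toReal := by
      rw [one_div, one_div, ENNReal.toReal_inv]
    have hXr : eLpNorm f (ENNReal.ofReal r) volume =
        (∫⁻ x, (‖f x‖₊ : ℝ≥0∞) ^ r ∂volume) ^ (1/r) := by
      rw [eLpNorm_eq_lintegral_rpow_enorm_toReal (by simpa using hr) ENNReal.ofReal_ne_top,
        ENNReal.toReal_ofReal hr.le]
      rfl
    have key : ∫⁻ x, (‖f x‖₊ : ℝ≥0∞) ^ q.toReal ∂volume ≤
        S ^ (q.toReal - r) * ∫⁻ x, (‖f x‖₊ : ℝ≥0∞) ^ r ∂volume := by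
      rw [← lintegral_const_mul' _ _ (ENNReal.rpow_ne_top_of_nonneg (by linarith) hS)]
      refine lintegral_mono_ae ?_
      filter_upwards [ae_le_essSup (fun x => (‖f x‖₊ : ℝ≥0∞))] with x hx
      rcases eq_or_ne (‖f x‖₊ : ℝ≥0∞) 0 with h0 | h0
      · rw [h0, ENNReal.zero_rpow_of_pos hqt, ENNReal.zero_rpow_of_pos hr, mul_zero]
      · have : (‖f x‖₊ : ℝ≥0∞) ^ q.toReal =
            (‖f x‖₊ : ℝ≥0∞) ^ (q.toReal - r) * (‖f x‖₊ : ℝ≥0∞) ^ r := by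
          rw [← ENNReal.rpow_add _ _ h0 ENNReal.coe_ne_top, sub_add_cancel]
        rw [this]
        gcongr
        exact hx
    rw [eLpNorm_eq_lintegral_rpow_enorm_toReal hq0 hq]
    calc (∫⁻ x, (‖f x‖₊ : ℝ≥0∞) ^ q.toReal ∂volume) ^ (1 / q.toReal)
        ≤ (S ^ (q.toReal - r) * ∫⁻ x, (‖f x‖₊ : ℝ≥0∞) ^ r ∂volume) ^ (1 / q.toReal) :=
          ENNReal.rpow_le_rpow key (by positivity)
      _ = S ^ (1 - r * (1/q).toReal) *
            eLpNorm f (ENNReal.ofReal r) volume ^ (r * (1/q).toReal) := by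
          rw [ENNReal.mul_rpow_of_nonneg _ _ (by positivity), hXr, ← ENNReal.rpow_mul,
            ← ENNReal.rpow_mul, htq]
          congr 2
          · field_simp
          · field_simp

/-- FTC bound: if `F' = g` with `|g| ≤ φ` integrable, then `F x ≤ F a + ∫ φ`. -/
lemma gn_ftc_bound {F g φ : ℝ → ℝ} (hF : ∀ t, HasDerivAt F (g t) t)
    (hg : Integrable g volume) (hφ : Integrable φ volume)
    (hgφ : ∀ t, |g t| ≤ φ t) (hφ0 : ∀ t, 0 ≤ φ t) (a x : ℝ) :
    |F x| ≤ |F a| + ∫ t, φ t := by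
  have h1 : ∫ t in a..x, g t = F x - F a :=
    intervalIntegral.integral_eq_sub_of_hasDerivAt (fun t _ => hF t)
      (hg.intervalIntegrable)
  have h2 : |∫ t in a..x, g t| ≤ ∫ t, φ t := by
    calc |∫ t in a..x, g t| ≤ ∫ t in Set.uIoc a x, |g t| := by
          simpa [Real.norm_eq_abs] using
            intervalIntegral.norm_integral_le_integral_norm_uIoc (f := g) (a := a) (b := x)
              (μ := volume)
      _ ≤ ∫ t in Set.uIoc a x, φ t :=
          setIntegral_mono (hg.abs.integrableOn) (hφ.integrableOn) hgφ
      _ ≤ ∫ t, φ t := setIntegral_le_integral hφ (ae_of_all _ hφ0)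
  rw [h1] at h2
  have h3 := abs_sub_abs_le_abs_sub (F x) (F a)
  linarith

/-- **Gagliardo–Nirenberg inequality on ℝ.**  For exponents `1 ≤ m`, `1 ≤ r`,
`r ≤ q`, with `q < ∞` required when `m = 1`, and
`θ = (1/r − 1/q) (1/r − 1/m + 1)⁻¹`, there is a constant `C > 0` such that every
`f ∈ W^{1,m}(ℝ) ∩ L^r(ℝ)` (with classical derivative `f'`) satisfies
`‖f‖_{L^q} ≤ C ‖f‖_{L^r}^{1−θ} ‖f'‖_{L^m}^{θ}`. -/
theorem gagliardo_nirenberg_R (m r : ℝ) (q : ℝ≥0∞) (hm : 1 ≤ m) (hr : 1 ≤ r)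
    (hrq : ENNReal.ofReal r ≤ q) (hq_top : m = 1 → q ≠ ∞) :
    ∃ C : ℝ, 0 < C ∧
      ∀ f f' : ℝ → ℝ, (∀ x, HasDerivAt f (f' x) x) →
        MemLp f (ENNReal.ofReal m) volume →
        MemLp f' (ENNReal.ofReal m) volume →
        MemLp f (ENNReal.ofReal r) volume →
        eLpNorm f q volume ≤
          ENNReal.ofReal C *
            eLpNorm f (ENNReal.ofReal r) volume ^
              (1 - (1 / r - (1 / q).toReal) / (1 / r - 1 / m + 1)) *
            eLpNorm f' (ENNReal.ofReal m) volume ^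
              ((1 / r - (1 / q).toReal) / (1 / r - 1 / m + 1)) := by
  have hm0 : (0:ℝ) < m := lt_of_lt_of_le one_pos hm
  have hr0 : (0:ℝ) < r := lt_of_lt_of_le one_pos hr
  set c : ℝ := 1 - 1/m with hc_def
  have hc0 : 0 ≤ c := by
    have h1 : 1/m ≤ 1 := by rw [div_le_one hm0]; exact hm
    rw [hc_def]; linarith
  set s : ℝ := 1 + r * c with hs_def
  have hs1 : (1:ℝ) ≤ s := by nlinarith
  have hs0 : (0:ℝ) < s := by linarith
  refine ⟨s, by linarith, ?_⟩
  intro f f' hder hfm hf'm hfr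
  set tq : ℝ := (1/q).toReal with htq_def
  have htq0 : 0 ≤ tq := ENNReal.toReal_nonneg
  have hrtq : r * tq ≤ 1 := by
    rcases eq_or_ne q ∞ with hq | hq
    · simp [htq_def, hq]
    · have hq0 : q ≠ 0 := (lt_of_lt_of_le (ENNReal.ofReal_pos.2 hr0) hrq).ne'
      have hqt : 0 < q.toReal := ENNReal.toReal_pos hq0 hq
      have hrqt : r ≤ q.toReal := by
        have := ENNReal.toReal_mono hq hrq
        rwa [ENNReal.toReal_ofReal hr0.le] at this
      have h2 : tq = 1 / q.toReal := by rw [htq_def, one_div, one_div, ENNReal.toReal_inv]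
      rw [h2, mul_one_div, div_le_one hqt]
      exact hrqt
  have hθ : (1/r - tq)/(1/r - 1/m + 1) = (1 - r*tq)/s := by
    have hden : 1/r - 1/m + 1 = s / r := by
      rw [hs_def, hc_def]; field_simp; ring
    rw [hden, div_div_eq_mul_div, div_eq_div_iff (by positivity) (by positivity)]
    field_simp
  rw [hθ]
  set R := eLpNorm f (ENNReal.ofReal r) volume with hRdef
  set M := eLpNorm f' (ENNReal.ofReal m) volume with hMdef
  have hr_ne : ENNReal.ofReal r ≠ 0 := by simpa using hr0
  have hRtop : R ≠ ∞ := hfr.2.ne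
  have hMtop : M ≠ ∞ := hf'm.2.ne
  by_cases hR0 : R = 0
  · have hf0 : f =ᵐ[volume] 0 := (eLpNorm_eq_zero_iff hfr.1 hr_ne).1 hR0
    have h1 : eLpNorm f q volume = 0 := by rw [eLpNorm_congr_ae hf0, eLpNorm_zero]
    rw [h1]; exact zero_le
  have hf_cont : Continuous f := continuous_iff_continuousAt.2 fun x => (hder x).continuousAt
  set g₁ : ℝ → ℝ := fun x => |f x| ^ (s - 1) with hg₁def
  have hs1' : (0:ℝ) ≤ s - 1 := by linarith
  have hg₁_cont : Continuous g₁ := (hf_cont.abs).rpow_const fun x => Or.inr hs1'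
  have hg₁_nonneg : ∀ x, 0 ≤ g₁ x := fun x => Real.rpow_nonneg (abs_nonneg _) _
  set p' : ℝ≥0∞ := (1 - 1/ENNReal.ofReal m)⁻¹ with hp'def
  have hm1e : (1:ℝ≥0∞) ≤ ENNReal.ofReal m := by
    rw [← ENNReal.ofReal_one]; exact ENNReal.ofReal_le_ofReal hm
  have hpqr : (1:ℝ≥0∞)/1 = 1/p' + 1/ENNReal.ofReal m := by
    rw [hp'def, one_div p', inv_inv, one_div (1:ℝ≥0∞), inv_one, one_div]
    exact (tsub_add_cancel_of_le (ENNReal.inv_le_one.2 hm1e)).symm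
  have hE1 : eLpNorm g₁ p' volume = R ^ (r * c) := by
    rcases eq_or_lt_of_le hm with hm_eq | hm_gt
    · have hc_eq : c = 0 := by rw [hc_def, ← hm_eq]; norm_num
      have hs_eq : s = 1 := by rw [hs_def, hc_eq]; ring
      have hp'_eq : p' = ∞ := by
        rw [hp'def, ← hm_eq, ENNReal.ofReal_one]
        simp
      have hg₁_eq : g₁ = fun _ => (1:ℝ) := by
        funext x
        show |f x| ^ (s - 1) = 1
        rw [hs_eq, sub_self, Real.rpow_zero]
      rw [hg₁_eq, hp'_eq, hc_eq, mul_zero, ENNReal.rpow_zero, eLpNorm_exponent_top,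
        eLpNormEssSup_const _ (Measure.measure_univ_ne_zero.1 (by simp [Real.volume_univ]))]
      simp
    · have hcpos : 0 < c := by
        have h1 : 1/m < 1 := by rw [div_lt_one hm0]; exact hm_gt
        rw [hc_def]; linarith
      have h1 : ENNReal.ofReal c = 1 - 1/ENNReal.ofReal m := by
        rw [hc_def, ENNReal.ofReal_sub _ (by positivity), ENNReal.ofReal_one, one_div, one_div,
          ENNReal.ofReal_inv_of_pos hm0]
      have hp'_eq : p' = ENNReal.ofReal (1/c) := by
        rw [hp'def, ← h1, one_div, ENNReal.ofReal_inv_of_pos hcpos]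
      have hp'0 : p' ≠ 0 := by
        rw [hp'_eq]
        simpa using (by positivity : (0:ℝ) < 1/c)
      have hp't : p' ≠ ∞ := by rw [hp'_eq]; exact ENNReal.ofReal_ne_top
      have hp'toReal : p'.toReal = 1/c := by
        rw [hp'_eq, ENNReal.toReal_ofReal (by positivity)]
      rw [eLpNorm_eq_lintegral_rpow_enorm_toReal hp'0 hp't, hp'toReal]
      have hintg : ∀ x, (‖g₁ x‖₊ : ℝ≥0∞) ^ (1/c) = (‖f x‖₊ : ℝ≥0∞) ^ r := by
        intro x
        rw [← enorm_eq_nnnorm, ← enorm_eq_nnnorm, ← ofReal_norm, ← ofReal_norm, Real.norm_eq_abs,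
          Real.norm_eq_abs]
        show (ENNReal.ofReal |(|f x| ^ (s-1))| ) ^ (1/c) = ENNReal.ofReal |f x| ^ r
        rw [abs_of_nonneg (Real.rpow_nonneg (abs_nonneg _) _),
          ← ENNReal.ofReal_rpow_of_nonneg (abs_nonneg _) hs1', ← ENNReal.rpow_mul]
        congr 1
        rw [hs_def]
        field_simp
        ring
      simp_rw [enorm_eq_nnnorm, hintg]
      have hXR : (∫⁻ x, (‖f x‖₊ : ℝ≥0∞) ^ r ∂volume) = R ^ r := by
        rw [hRdef, eLpNorm_eq_lintegral_rpow_enorm_toReal hr_ne ENNReal.ofReal_ne_top,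
          ENNReal.toReal_ofReal hr0.le, ← ENNReal.rpow_mul, one_div,
          inv_mul_cancel₀ hr0.ne', ENNReal.rpow_one]
        rfl
      rw [hXR, ← ENNReal.rpow_mul]
      congr 1
      rw [one_div_one_div]
  have hH : eLpNorm (fun x => g₁ x * f' x) 1 volume ≤ R ^ (r*c) * M := by
    have h1 := eLpNorm_le_eLpNorm_mul_eLpNorm'_of_norm (μ := volume)
      (p := p') (q := ENNReal.ofReal m) (r := 1)
      hg₁_cont.aestronglyMeasurable hf'm.1 (· * ·) 1
      (Filter.Eventually.of_forall fun x => by simp [norm_mul])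
      (hpqr := ⟨by simpa only [one_div] using hpqr.symm⟩)
    rw [hE1, ENNReal.coe_one, one_mul] at h1
    exact h1
  have hRrc_top : R ^ (r*c) ≠ ∞ := ENNReal.rpow_ne_top_of_nonneg (by positivity) hRtop
  have hRHS_top : R ^ (r*c) * M ≠ ∞ := ENNReal.mul_ne_top hRrc_top hMtop
  have hgg_int : Integrable (fun x => g₁ x * f' x) volume :=
    memLp_one_iff_integrable.1
      ⟨hg₁_cont.aestronglyMeasurable.mul hf'm.1, hH.trans_lt (lt_top_iff_ne_top.2 hRHS_top)⟩
  set φ : ℝ → ℝ := fun x => s * (g₁ x * |f' x|) with hφdef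
  have habs1 : (fun x => g₁ x * |f' x|) = fun x => |g₁ x * f' x| := by
    funext x; rw [abs_mul, abs_of_nonneg (hg₁_nonneg x)]
  have hφ_int : Integrable φ volume := by
    have h2 : Integrable (fun x => g₁ x * |f' x|) volume := habs1 ▸ hgg_int.abs
    exact h2.const_mul s
  have hφ0 : ∀ x, 0 ≤ φ x := fun x =>
    mul_nonneg hs0.le (mul_nonneg (hg₁_nonneg x) (abs_nonneg _))
  set K : ℝ := ∫ x, φ x with hKdef
  have hK_ofReal : ENNReal.ofReal K = ENNReal.ofReal s * eLpNorm (fun x => g₁ x * f' x) 1 volume := by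
    rw [eLpNorm_one_eq_lintegral_enorm, hKdef, hφdef]
    rw [integral_const_mul, ENNReal.ofReal_mul hs0.le]
    congr 1
    rw [← ofReal_integral_norm_eq_lintegral_enorm hgg_int]
    congr 1
    refine integral_congr_ae (Filter.Eventually.of_forall fun x => ?_)
    show g₁ x * |f' x| = ‖g₁ x * f' x‖
    rw [Real.norm_eq_abs, abs_mul, abs_of_nonneg (hg₁_nonneg x)]
  have key0 : ∀ a x : ℝ, |f x| ^ s ≤ |f a| ^ s + K := by
    intro a x
    rcases eq_or_lt_of_le hs1 with hs_eq | hs_gt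
    · have hseq : s = (1:ℝ) := hs_eq.symm
      have hg1 : ∀ t, g₁ t = 1 := fun t => by
        show |f t| ^ (s - 1) = 1
        rw [hseq, sub_self, Real.rpow_zero]
      have hf'eq : (fun t => g₁ t * f' t) = f' := funext fun t => by rw [hg1 t, one_mul]
      have hf'_int : Integrable f' volume := hf'eq ▸ hgg_int
      have hφeq : φ = fun t => |f' t| := by
        funext t
        show s * (g₁ t * |f' t|) = |f' t|
        rw [hg1 t, hseq]; ring
      have hb := gn_ftc_bound hder hf'_int (hφeq ▸ hφ_int : Integrable (fun t => |f' t|) volume)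
        (fun t => le_refl _) (fun t => abs_nonneg _) a x
      have hKeq : K = ∫ t, |f' t| := by rw [hKdef, hφeq]
      simp only [hseq, Real.rpow_one]
      rw [hKeq]
      exact hb
    · have hder2 : ∀ t, HasDerivAt (fun y => |f y| ^ s) ((s * |f t| ^ (s-2) * f t) * f' t) t :=
        fun t => by
          exact ((hasDerivAt_abs_rpow (f t) hs_gt).comp t (hder t))
      have hbound : ∀ t, |(s * |f t| ^ (s-2) * f t) * f' t| ≤ φ t := by
        intro t
        have habs : |(s * |f t| ^ (s-2) * f t) * f' t| = s * (|f t| ^ (s-2) * |f t|) * |f' t| := by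
          rw [abs_mul, abs_mul, abs_mul, abs_of_nonneg hs0.le,
            abs_of_nonneg (Real.rpow_nonneg (abs_nonneg _) _)]
          ring
        rw [habs]
        show _ ≤ s * (|f t| ^ (s - 1) * |f' t|)
        rcases eq_or_ne (f t) 0 with h0 | h0
        · have h2 : |f t| ^ (s-2) * |f t| = 0 := by rw [h0]; simp
          rw [h2, mul_zero, zero_mul]
          positivity
        · have h2 : |f t| ^ (s-2) * |f t| = |f t| ^ (s-1) := by
            rw [← Real.rpow_add_one (abs_ne_zero.2 h0) (s-2)]
            congr 1
            ring
          rw [h2, mul_assoc]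
      have hmeas2 : AEStronglyMeasurable (fun t => (s * |f t| ^ (s-2) * f t) * f' t) volume := by
        refine AEStronglyMeasurable.mul ?_ hf'm.1
        exact ((measurable_const.mul (hf_cont.measurable.abs.pow measurable_const)).mul
          hf_cont.measurable).aestronglyMeasurable
      have hint2 : Integrable (fun t => (s * |f t| ^ (s-2) * f t) * f' t) volume :=
        hφ_int.mono' hmeas2
          (Filter.Eventually.of_forall fun t => by rw [Real.norm_eq_abs]; exact hbound t)
      have hb := gn_ftc_bound hder2 hint2 hφ_int hbound hφ0 a x
      rw [abs_of_nonneg (Real.rpow_nonneg (abs_nonneg _) _),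
        abs_of_nonneg (Real.rpow_nonneg (abs_nonneg _) _)] at hb
      rw [hKdef]
      exact hb
  have key : ∀ x, |f x| ^ s ≤ K := by
    intro x
    refine le_of_forall_sub_le fun δ hδ => ?_
    obtain ⟨a, ha⟩ := gn_exists_abs_lt hr_ne ENNReal.ofReal_ne_top hfr
      (Real.rpow_pos_of_pos hδ (1/s))
    have h1 : |f a| ^ s ≤ δ := by
      calc |f a| ^ s ≤ (δ ^ (1/s)) ^ s :=
            Real.rpow_le_rpow (abs_nonneg _) ha.le hs0.le
        _ = δ := by
            rw [← Real.rpow_mul hδ.le, one_div, inv_mul_cancel₀ hs0.ne', Real.rpow_one]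
    linarith [key0 a x]
  have hsup : eLpNormEssSup f volume ≤ (ENNReal.ofReal s * (R ^ (r*c) * M)) ^ (1/s) := by
    have h1 : eLpNormEssSup f volume ≤ ENNReal.ofReal K ^ (1/s) := by
      show essSup (fun x => (‖f x‖₊ : ℝ≥0∞)) volume ≤ _
      refine essSup_le_of_ae_le _ (Filter.Eventually.of_forall fun x => ?_)
      have h2 : ((‖f x‖₊ : ℝ≥0∞)) ^ s ≤ ENNReal.ofReal K := by
        rw [← enorm_eq_nnnorm, ← ofReal_norm, Real.norm_eq_abs,
          ENNReal.ofReal_rpow_of_nonneg (abs_nonneg _) hs0.le]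
        exact ENNReal.ofReal_le_ofReal (key x)
      calc (‖f x‖₊ : ℝ≥0∞) = ((‖f x‖₊ : ℝ≥0∞) ^ s) ^ (1/s) := by
            rw [← ENNReal.rpow_mul, mul_one_div, div_self hs0.ne', ENNReal.rpow_one]
        _ ≤ ENNReal.ofReal K ^ (1/s) := ENNReal.rpow_le_rpow h2 (by positivity)
    refine h1.trans (ENNReal.rpow_le_rpow ?_ (by positivity))
    rw [hK_ofReal]
    exact mul_le_mul_right hH _
  have hS_top : eLpNormEssSup f volume ≠ ∞ := by
    refine (lt_of_le_of_lt hsup ?_).ne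
    exact ENNReal.rpow_lt_top_of_nonneg (by positivity)
      (ENNReal.mul_ne_top ENNReal.ofReal_ne_top hRHS_top)
  have hmain := gn_interp hr0 hrq hS_top
  rw [← htq_def] at hmain
  set e1 : ℝ := 1 - r * tq with he1def
  have he1_0 : (0:ℝ) ≤ e1 := by rw [he1def]; linarith
  have he1_1 : e1 ≤ 1 := by rw [he1def]; nlinarith
  have hθ1 : (1 - r*tq)/s = (1/s) * e1 := by rw [he1def]; ring
  have hexp : (r*c) * ((1/s) * e1) + r * tq = 1 - (1/s) * e1 := by
    rw [he1def, hs_def]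
    field_simp
    ring
  calc eLpNorm f q volume
      ≤ eLpNormEssSup f volume ^ e1 * R ^ (r * tq) := hmain
    _ ≤ ((ENNReal.ofReal s * (R ^ (r*c) * M)) ^ (1/s)) ^ e1 * R ^ (r*tq) :=
        mul_le_mul_left (ENNReal.rpow_le_rpow hsup he1_0) _
    _ = ENNReal.ofReal s ^ ((1/s)*e1) * (R ^ ((r*c)*((1/s)*e1)) * M ^ ((1/s)*e1))
          * R ^ (r*tq) := by
        rw [← ENNReal.rpow_mul, ENNReal.mul_rpow_of_nonneg _ _ (by positivity),
          ENNReal.mul_rpow_of_nonneg _ _ (by positivity), ← ENNReal.rpow_mul]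
    _ = ENNReal.ofReal s ^ ((1/s)*e1) * R ^ ((r*c)*((1/s)*e1) + r*tq) * M ^ ((1/s)*e1) := by
        rw [ENNReal.rpow_add _ _ hR0 hRtop]
        ring
    _ ≤ ENNReal.ofReal s * R ^ (1 - (1/s)*e1) * M ^ ((1/s)*e1) := by
        rw [hexp]
        have hbase : (1:ℝ≥0∞) ≤ ENNReal.ofReal s := by
          rw [← ENNReal.ofReal_one]; exact ENNReal.ofReal_le_ofReal hs1
        have h5 : ENNReal.ofReal s ^ ((1/s)*e1) ≤ ENNReal.ofReal s ^ (1:ℝ) :=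
          ENNReal.rpow_le_rpow_of_exponent_le hbase
            (show (1/s)*e1 ≤ 1 by
              rw [mul_comm, ← div_eq_mul_one_div, div_le_one hs0]
              linarith)
        calc ENNReal.ofReal s ^ ((1/s)*e1) * R ^ (1 - (1/s)*e1) * M ^ ((1/s)*e1)
            ≤ (ENNReal.ofReal s ^ (1:ℝ)) * R ^ (1 - (1/s)*e1) * M ^ ((1/s)*e1) :=
              mul_le_mul_left (mul_le_mul_left h5 _) _
          _ = ENNReal.ofReal s * R ^ (1 - (1/s)*e1) * M ^ ((1/s)*e1) := by
              rw [ENNReal.rpow_one]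
    _ = ENNReal.ofReal s * R ^ (1 - (1 - r*tq)/s) * M ^ ((1 - r*tq)/s) := by
        rw [hθ1]
end

section
/- Let γ > 1, ρ̄ ≥ 1, E > 0. Suppose ρ : ℝ → [0,∞) is measurable with ∫_ℝ Φ(ρ(x)) dx ≤ E, where Φ(ρ) = (ρ^γ − ρ̄^γ − γ ρ̄^{γ−1}(ρ − ρ̄))/(γ − 1), and u ∈ H¹(ℝ) satisfies ∫_ℝ ρ u² dx ≤ E. Then there is a constant C depending only on γ, ρ̄ and E such that ‖u‖_{L²(ℝ)}² ≤ C(1 + ‖u_x‖_{L²(ℝ)}²), and consequently ‖u‖_{L^∞(ℝ)} ≤ C(1 + ‖u_x‖_{L²(ℝ)}). -/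
set_option maxHeartbeats 1600000


open MeasureTheory

/-- The potential energy `Φ(ρ) = (ρ^γ − ρ̄^γ − γ ρ̄^{γ−1}(ρ − ρ̄))/(γ − 1)`. -/
noncomputable def potentialEnergy (γ ρbar ρ : ℝ) : ℝ :=
  (ρ ^ γ - ρbar ^ γ - γ * ρbar ^ (γ - 1) * (ρ - ρbar)) / (γ - 1)

/-- Tangent line inequality for `x ^ γ` (Bernoulli). -/
lemma rpow_tangent_le {γ a b : ℝ} (hγ : 1 ≤ γ) (ha : 0 < a) (hb : 0 ≤ b) :
    a ^ γ + γ * a ^ (γ - 1) * (b - a) ≤ b ^ γ := by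
  have hs : (-1 : ℝ) ≤ b / a - 1 := by
    have : (0:ℝ) ≤ b / a := div_nonneg hb ha.le
    linarith
  have h := one_add_mul_self_le_rpow_one_add hs hγ
  have h1 : (1 + (b / a - 1)) = b / a := by ring
  rw [h1, Real.div_rpow hb ha.le] at h
  have haγ : (0:ℝ) < a ^ γ := Real.rpow_pos_of_pos ha γ
  have h2 : (1 + γ * (b / a - 1)) * a ^ γ ≤ b ^ γ := (le_div_iff₀ haγ).mp h
  have h3 : a ^ (γ - 1) = a ^ γ / a := by rw [Real.rpow_sub ha, Real.rpow_one]
  have h4 : (1 + γ * (b / a - 1)) * a ^ γ = a ^ γ + γ * (a ^ γ / a) * (b - a) := by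
    field_simp
  rw [h3]; linarith [h4 ▸ h2]

/-- Strict tangent line inequality for `x ^ γ`. -/
lemma rpow_tangent_lt {γ a b : ℝ} (hγ : 1 < γ) (ha : 0 < a) (hb : 0 ≤ b) (hne : b ≠ a) :
    a ^ γ + γ * a ^ (γ - 1) * (b - a) < b ^ γ := by
  have hs : (-1 : ℝ) ≤ b / a - 1 := by
    have : (0:ℝ) ≤ b / a := div_nonneg hb ha.le
    linarith
  have hs' : b / a - 1 ≠ 0 := by
    intro h
    apply hne
    have : b / a = 1 := by linarith
    field_simp at this
    linarith
  have h := one_add_mul_self_lt_rpow_one_add hs hs' hγ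
  have h1 : (1 + (b / a - 1)) = b / a := by ring
  rw [h1, Real.div_rpow hb ha.le] at h
  have haγ : (0:ℝ) < a ^ γ := Real.rpow_pos_of_pos ha γ
  have h2 : (1 + γ * (b / a - 1)) * a ^ γ < b ^ γ := (lt_div_iff₀ haγ).mp h
  have h3 : a ^ (γ - 1) = a ^ γ / a := by rw [Real.rpow_sub ha, Real.rpow_one]
  have h4 : (1 + γ * (b / a - 1)) * a ^ γ = a ^ γ + γ * (a ^ γ / a) * (b - a) := by
    field_simp
  rw [h3]; linarith [h4 ▸ h2]

/-- The potential energy is nonnegative. -/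
lemma potentialEnergy_nonneg {γ ρbar ρ : ℝ} (hγ : 1 < γ) (hρbar : 1 ≤ ρbar) (hρ : 0 ≤ ρ) :
    0 ≤ potentialEnergy γ ρbar ρ := by
  have h := rpow_tangent_le hγ.le (by linarith : (0:ℝ) < ρbar) hρ
  unfold potentialEnergy
  apply div_nonneg _ (by linarith : (0:ℝ) ≤ γ - 1)
  linarith

/-- The potential energy at `1/2` is strictly positive. -/
lemma potentialEnergy_half_pos {γ ρbar : ℝ} (hγ : 1 < γ) (hρbar : 1 ≤ ρbar) :
    0 < potentialEnergy γ ρbar (1/2) := by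
  have h := rpow_tangent_lt hγ (by linarith : (0:ℝ) < ρbar)
    (by norm_num : (0:ℝ) ≤ 1/2) (by intro h; rw [← h] at hρbar; norm_num at hρbar)
  unfold potentialEnergy
  apply div_pos _ (by linarith : (0:ℝ) < γ - 1)
  linarith

/-- The potential energy is at least its value at `1/2` for densities below `1/2`. -/
lemma potentialEnergy_ge_half {γ ρbar ρ : ℝ} (hγ : 1 < γ) (hρbar : 1 ≤ ρbar)
    (hρ : 0 ≤ ρ) (hρ2 : ρ ≤ 1/2) :
    potentialEnergy γ ρbar (1/2) ≤ potentialEnergy γ ρbar ρ := by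
  have htan := rpow_tangent_le hγ.le (by norm_num : (0:ℝ) < 1/2) hρ
  have hpow : ((1:ℝ)/2) ^ (γ - 1) ≤ ρbar ^ (γ - 1) :=
    Real.rpow_le_rpow (by norm_num) (by linarith) (by linarith)
  -- (γ-1)(Φ(ρ) - Φ(1/2)) = ρ^γ - (1/2)^γ - γ ρbar^{γ-1}(ρ - 1/2) ≥ 0
  have hγpos : (0:ℝ) < γ := by linarith
  have key : (1/2:ℝ) ^ γ + γ * ρbar ^ (γ - 1) * (ρ - 1/2) ≤ ρ ^ γ := by
    have h1 : γ * ρbar ^ (γ - 1) * (ρ - 1/2) ≤ γ * ((1:ℝ)/2) ^ (γ - 1) * (ρ - 1/2) := by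
      have hρ12 : ρ - 1/2 ≤ 0 := by linarith
      have hmul := mul_le_mul_of_nonpos_right hpow hρ12
      nlinarith [hmul, hγpos]
    linarith
  unfold potentialEnergy
  have hd : (0:ℝ) < γ - 1 := by linarith
  exact (div_le_div_iff_of_pos_right hd).mpr (by linarith)

/-- A function in `L²(ℝ)` is interval integrable. -/
lemma intervalIntegrable_of_memL2 {f : ℝ → ℝ} (hf : MemLp f 2 (volume : Measure ℝ))
    (a b : ℝ) : IntervalIntegrable f volume a b := by
  rw [intervalIntegrable_iff]
  have hsq : Integrable (fun x => f x ^ 2) volume := hf.integrable_sq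
  have hmeas : volume (Set.uIoc a b) < ⊤ := measure_Ioc_lt_top
  refine Integrable.mono' (g := fun x => 1 + f x ^ 2)
    (by exact (integrableOn_const (C := (1:ℝ)) hmeas.ne (by simp)).add hsq.integrableOn)
    (hf.aestronglyMeasurable.restrict) ?_
  filter_upwards with x
  have h1 : |f x| ≤ 1 + f x ^ 2 := by nlinarith [sq_nonneg (|f x| - 1), sq_abs (f x)]
  simpa using h1

/-- Key averaged pointwise bound. -/
lemma avg_bound {u : ℝ → ℝ} (hud : Differentiable ℝ u) (hu2 : MemLp u 2 (volume : Measure ℝ))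
    (hu'2 : MemLp (deriv u) 2 (volume : Measure ℝ)) {L t s : ℝ}
    (hL : 0 < L) (ht : 0 < t) (hs : 0 < s) (x : ℝ) :
    |u x| ≤ t/2 + (∫ y : ℝ, u y ^ 2)/(2*t*L) + s*L/2 + (∫ y : ℝ, deriv u y ^ 2)/(2*s) := by
  set S := ∫ y : ℝ, u y ^ 2 with hSdef
  set D := ∫ y : ℝ, deriv u y ^ 2 with hDdef
  have hucont : Continuous u := hud.continuous
  have hxL : x ≤ x + L := by linarith
  have hu'int : ∀ a b : ℝ, IntervalIntegrable (deriv u) volume a b :=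
    intervalIntegrable_of_memL2 hu'2
  have hu'abs : IntervalIntegrable (fun y => |deriv u y|) volume x (x + L) :=
    (hu'int x (x + L)).abs
  set K := ∫ y in x..(x + L), |deriv u y| with hKdef
  have step1 : ∀ y ∈ Set.Icc x (x + L), |u x| ≤ |u y| + K := by
    intro y hy
    have hftc : ∫ z in x..y, deriv u z = u y - u x :=
      intervalIntegral.integral_deriv_eq_sub (fun z _ => (hud z)) (hu'int x y)
    have h1 : |u y - u x| ≤ K := by
      rw [← hftc]
      calc |∫ z in x..y, deriv u z| ≤ ∫ z in x..y, |deriv u z| :=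
            intervalIntegral.abs_integral_le_integral_abs hy.1
        _ ≤ K := intervalIntegral.integral_mono_interval le_rfl hy.1 hy.2
            (Filter.Eventually.of_forall fun z => abs_nonneg _) hu'abs
    have h2 := abs_sub_abs_le_abs_sub (u x) (u y)
    rw [abs_sub_comm] at h2
    linarith
  have step2 : L * |u x| ≤ (∫ y in x..(x + L), |u y|) + L * K := by
    have h1 : ∫ y in x..(x + L), |u x| ≤ ∫ y in x..(x + L), (|u y| + K) :=
      intervalIntegral.integral_mono_on hxL intervalIntegrable_const
        ((hucont.abs.intervalIntegrable _ _).add intervalIntegrable_const) step1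
    rw [intervalIntegral.integral_const,
      intervalIntegral.integral_add (hucont.abs.intervalIntegrable _ _)
        intervalIntegrable_const, intervalIntegral.integral_const] at h1
    simp only [smul_eq_mul] at h1
    have : x + L - x = L := by ring
    rw [this] at h1
    linarith [h1]
  have int_le : ∀ (f : ℝ → ℝ), Integrable (fun y => f y ^ 2) volume →
      (∫ y in x..(x + L), f y ^ 2) ≤ ∫ y : ℝ, f y ^ 2 := by
    intro f hf
    rw [intervalIntegral.integral_of_le hxL]
    exact setIntegral_le_integral hf (Filter.Eventually.of_forall fun y => sq_nonneg _)
  have step3 : (∫ y in x..(x + L), |u y|) ≤ t*L/2 + S/(2*t) := by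
    have hsqint : IntervalIntegrable (fun y => u y ^ 2) volume x (x + L) :=
      ((hucont.pow 2).intervalIntegrable _ _)
    have h1 : ∫ y in x..(x + L), |u y| ≤ ∫ y in x..(x + L), (t/2 + u y ^ 2/(2*t)) := by
      apply intervalIntegral.integral_mono_on hxL (hucont.abs.intervalIntegrable _ _)
        (intervalIntegrable_const.add (hsqint.div_const _))
      intro y _
      have key : |u y| - t/2 ≤ u y ^ 2/(2*t) := by
        rw [le_div_iff₀ (by linarith : (0:ℝ) < 2*t)]
        nlinarith [sq_nonneg (|u y| - t), sq_abs (u y)]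
      linarith
    have h2 : ∫ y in x..(x + L), (t/2 + u y ^ 2/(2*t))
        = t/2 * L + (∫ y in x..(x + L), u y ^ 2)/(2*t) := by
      rw [intervalIntegral.integral_add intervalIntegrable_const (hsqint.div_const _),
        intervalIntegral.integral_const, intervalIntegral.integral_div]
      simp only [smul_eq_mul]
      ring
    have h3 : (∫ y in x..(x + L), u y ^ 2) ≤ S := int_le u hu2.integrable_sq
    have h4 : (∫ y in x..(x + L), u y ^ 2)/(2*t) ≤ S/(2*t) := by
      gcongr
    rw [h2] at h1
    linarith
  have step4 : K ≤ s*L/2 + D/(2*s) := by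
    have hsqint : IntervalIntegrable (fun y => deriv u y ^ 2) volume x (x + L) := by
      rw [intervalIntegrable_iff]
      exact hu'2.integrable_sq.integrableOn
    have h1 : K ≤ ∫ y in x..(x + L), (s/2 + deriv u y ^ 2/(2*s)) := by
      apply intervalIntegral.integral_mono_on hxL hu'abs
        (intervalIntegrable_const.add (hsqint.div_const _))
      intro y _
      have key : |deriv u y| - s/2 ≤ deriv u y ^ 2/(2*s) := by
        rw [le_div_iff₀ (by linarith : (0:ℝ) < 2*s)]
        nlinarith [sq_nonneg (|deriv u y| - s), sq_abs (deriv u y)]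
      linarith
    have h2 : ∫ y in x..(x + L), (s/2 + deriv u y ^ 2/(2*s))
        = s/2 * L + (∫ y in x..(x + L), deriv u y ^ 2)/(2*s) := by
      rw [intervalIntegral.integral_add intervalIntegrable_const (hsqint.div_const _),
        intervalIntegral.integral_const, intervalIntegral.integral_div]
      simp only [smul_eq_mul]
      ring
    have h3 : (∫ y in x..(x + L), deriv u y ^ 2) ≤ D := int_le _ hu'2.integrable_sq
    have h4 : (∫ y in x..(x + L), deriv u y ^ 2)/(2*s) ≤ D/(2*s) := by
      gcongr
    rw [h2] at h1
    linarith
  have step4' : L * K ≤ L * (s*L/2 + D/(2*s)) := by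
    exact mul_le_mul_of_nonneg_left step4 hL.le
  have key : L * |u x| ≤ t*L/2 + S/(2*t) + L * (s*L/2 + D/(2*s)) := by linarith
  have heq : L * (t/2 + S/(2*t*L) + s*L/2 + D/(2*s))
      = t*L/2 + S/(2*t) + L * (s*L/2 + D/(2*s)) := by
    field_simp
    ring
  have : L * |u x| ≤ L * (t/2 + S/(2*t*L) + s*L/2 + D/(2*s)) := by
    rw [heq]; exact key
  exact le_of_mul_le_mul_left this hL

/-- If `∫ Φ(ρ) ≤ E` and `∫ ρ u² ≤ E` with `u ∈ H¹(ℝ)`, then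
`‖u‖_{L²}² ≤ C (1 + ‖u_x‖_{L²}²)` and `‖u‖_{L^∞} ≤ C (1 + ‖u_x‖_{L²})`,
where `C` depends only on `γ, ρ̄, E`. -/
theorem velocity_L2_Linfty_bound (γ ρbar E : ℝ) (hγ : 1 < γ) (hρbar : 1 ≤ ρbar)
    (hE : 0 < E) :
    ∃ C : ℝ, 0 < C ∧
      ∀ (ρ u : ℝ → ℝ), Measurable ρ → (∀ x, 0 ≤ ρ x) →
        Integrable (fun x => potentialEnergy γ ρbar (ρ x)) →
        (∫ x : ℝ, potentialEnergy γ ρbar (ρ x)) ≤ E →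
        Differentiable ℝ u →
        MemLp u 2 (volume : Measure ℝ) →
        MemLp (deriv u) 2 (volume : Measure ℝ) →
        Integrable (fun x => ρ x * u x ^ 2) →
        (∫ x : ℝ, ρ x * u x ^ 2) ≤ E →
        ((∫ x : ℝ, u x ^ 2) ≤ C * (1 + ∫ x : ℝ, deriv u x ^ 2)) ∧
        (∀ x : ℝ, |u x| ≤ C * (1 + (∫ x : ℝ, deriv u x ^ 2) ^ ((1 : ℝ) / 2))) := by
  set c := potentialEnergy γ ρbar (1/2) with hcdef
  clear_value c
  have hc : 0 < c := by rw [hcdef]; exact potentialEnergy_half_pos hγ hρbar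
  set M := E / c with hMdef
  clear_value M
  have hM : 0 < M := by rw [hMdef]; exact div_pos hE hc
  set L := 1 + 4 * M with hLdef
  clear_value L
  have hL : (0:ℝ) < L := by rw [hLdef]; linarith
  have hL1 : (1:ℝ) ≤ L := by rw [hLdef]; linarith
  set C₁ := 4 * E + 1 + 4 * M * L ^ 2 with hC1def
  clear_value C₁
  have hC₁ : 0 < C₁ := by
    have h4 : (0:ℝ) < 4 * M * L ^ 2 := mul_pos (by linarith) (pow_pos hL 2)
    rw [hC1def]; linarith
  have hsqC : (0:ℝ) ≤ Real.sqrt (C₁ + 1) := Real.sqrt_nonneg _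
  refine ⟨C₁ + Real.sqrt (C₁ + 1) + 1, by linarith, ?_⟩
  intro ρ u hρm hρ0 hΦint hΦE hud hu2 hu'2 hρu hρuE
  set S := ∫ x : ℝ, u x ^ 2 with hSdef
  set D := ∫ x : ℝ, deriv u x ^ 2 with hDdef
  clear_value S D
  have hS0 : 0 ≤ S := by rw [hSdef]; exact integral_nonneg fun x => sq_nonneg _
  have hD0 : 0 ≤ D := by rw [hDdef]; exact integral_nonneg fun x => sq_nonneg _
  -- the bad set where the density is small
  set A := {x : ℝ | ρ x < 1/2} with hAdef
  clear_value A
  have hAm : MeasurableSet A := by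
    rw [hAdef]; exact measurableSet_lt hρm measurable_const
  have hsub : A ⊆ {x | c ≤ potentialEnergy γ ρbar (ρ x)} := by
    intro x hx
    rw [hAdef] at hx
    rw [Set.mem_setOf_eq, hcdef]
    exact potentialEnergy_ge_half hγ hρbar (hρ0 x) (le_of_lt hx)
  have hAfin : volume A < ⊤ :=
    lt_of_le_of_lt (measure_mono hsub) (hΦint.measure_ge_lt_top hc)
  set m := (volume A).toReal with hmdef
  clear_value m
  have hm0 : 0 ≤ m := by rw [hmdef]; exact ENNReal.toReal_nonneg
  have hmM : m ≤ M := by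
    have h1 : c * (volume A).toReal ≤ ∫ x in A, potentialEnergy γ ρbar (ρ x) :=
      setIntegral_ge_of_const_le_real hAm hAfin.ne (fun x hx => hsub hx) hΦint.integrableOn
    rw [← hmdef] at h1
    have h2 : (∫ x in A, potentialEnergy γ ρbar (ρ x))
        ≤ ∫ x : ℝ, potentialEnergy γ ρbar (ρ x) :=
      setIntegral_le_integral hΦint (Filter.Eventually.of_forall fun x =>
        potentialEnergy_nonneg hγ hρbar (hρ0 x))
    have h3 : c * m ≤ E := le_trans h1 (le_trans h2 hΦE)
    rw [hMdef, le_div_iff₀ hc]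
    linarith [mul_comm m c]
  have hu2sq : Integrable (fun x => u x ^ 2) volume := hu2.integrable_sq
  -- bound on the complement of the bad set
  have h_compl : (∫ x in Aᶜ, u x ^ 2) ≤ 2 * E := by
    have h1 : (∫ x in Aᶜ, u x ^ 2) ≤ ∫ x in Aᶜ, 2 * (ρ x * u x ^ 2) := by
      refine setIntegral_mono_on hu2sq.integrableOn (hρu.const_mul 2).integrableOn
        hAm.compl ?_
      intro x hx
      have hx' : (1:ℝ)/2 ≤ ρ x := by
        rw [Set.mem_compl_iff, hAdef, Set.mem_setOf_eq, not_lt] at hx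
        exact hx
      have hprod : 0 ≤ (ρ x - 1/2) * u x ^ 2 :=
        mul_nonneg (by linarith) (sq_nonneg _)
      nlinarith [hprod]
    have h2 : (∫ x in Aᶜ, 2 * (ρ x * u x ^ 2)) = 2 * ∫ x in Aᶜ, ρ x * u x ^ 2 :=
      integral_const_mul 2 _
    have h3 : (∫ x in Aᶜ, ρ x * u x ^ 2) ≤ ∫ x : ℝ, ρ x * u x ^ 2 :=
      setIntegral_le_integral hρu (Filter.Eventually.of_forall fun x =>
        mul_nonneg (hρ0 x) (sq_nonneg _))
    rw [h2] at h1
    linarith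
  -- pointwise bound with optimized parameters
  have hP : (0:ℝ) < (S + 1)/L := div_pos (by linarith) hL
  set t1 := Real.sqrt ((S + 1)/L) with ht1def
  clear_value t1
  have ht1 : 0 < t1 := by rw [ht1def]; exact Real.sqrt_pos.mpr hP
  set s1 := Real.sqrt (D + 1) with hs1def
  clear_value s1
  have hs1 : 0 < s1 := by rw [hs1def]; exact Real.sqrt_pos.mpr (by linarith)
  have ht1sq : t1 ^ 2 = (S + 1)/L := by rw [ht1def]; exact Real.sq_sqrt hP.le
  have hs1sq : s1 ^ 2 = D + 1 := by rw [hs1def]; exact Real.sq_sqrt (by linarith)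
  have hT : t1 ^ 2 * L = S + 1 := by rw [ht1sq]; field_simp
  set B := t1/2 + S/(2*t1*L) + s1*L/2 + D/(2*s1) with hBdef
  clear_value B
  have hB : ∀ x, |u x| ≤ B := by
    intro x
    rw [hBdef, hSdef, hDdef]
    exact avg_bound hud hu2 hu'2 hL ht1 hs1 x
  have hB0 : 0 ≤ B := le_trans (abs_nonneg (u 0)) (hB 0)
  have ha2 : S/(2*t1*L) ≤ t1/2 := by
    rw [div_le_div_iff₀ (by positivity) (by norm_num : (0:ℝ) < 2)]
    linarith only [hT, hS0]
  have ha4 : D/(2*s1) ≤ s1/2 := by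
    rw [div_le_div_iff₀ (by positivity) (by norm_num : (0:ℝ) < 2)]
    linarith only [hs1sq, hD0]
  have hBle : B ≤ t1 + s1 * L := by
    have h5 : s1*L/2 + s1/2 ≤ s1*L := by
      linarith only [mul_nonneg hs1.le (sub_nonneg.mpr hL1)]
    rw [hBdef]
    linarith
  have hBsq : B ^ 2 ≤ 2*((S+1)/L) + 2*((D+1)*L^2) := by
    have h6 : B * B ≤ (t1 + s1*L) * (t1 + s1*L) :=
      mul_le_mul hBle hBle hB0 (by positivity)
    have h7 : (t1 + s1*L) * (t1 + s1*L) ≤ 2*t1^2 + 2*(s1^2*L^2) := by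
      linarith only [sq_nonneg (t1 - s1*L)]
    calc B ^ 2 = B * B := by ring
      _ ≤ 2*t1^2 + 2*(s1^2*L^2) := le_trans h6 h7
      _ = 2*((S+1)/L) + 2*((D+1)*L^2) := by rw [ht1sq, hs1sq]
  -- bound on the bad set
  have h_bad : (∫ x in A, u x ^ 2) ≤ m * B ^ 2 := by
    have h1 : (∫ x in A, u x ^ 2) ≤ ∫ _x in A, B ^ 2 :=
      setIntegral_mono_on hu2sq.integrableOn (integrableOn_const hAfin.ne) hAm
        (fun x _ => by
          have h6 : |u x| * |u x| ≤ B * B :=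
            mul_le_mul (hB x) (hB x) (abs_nonneg _) hB0
          calc u x ^ 2 = |u x| * |u x| := by rw [← sq_abs]; ring
            _ ≤ B * B := h6
            _ = B ^ 2 := by ring)
    have h2 : (∫ _x in A, (B^2 : ℝ)) = m * B ^ 2 := by
      rw [setIntegral_const, smul_eq_mul, measureReal_def, ← hmdef]
    rw [h2] at h1
    exact h1
  have hsplit : (∫ x in A, u x ^ 2) + (∫ x in Aᶜ, u x ^ 2) = S := by
    rw [hSdef]; exact integral_add_compl hAm hu2sq
  -- the L² bound
  have hmB : m * B ^ 2 ≤ (S+1)/2 + 2*M*L^2*(D+1) := by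
    have h1 : m * B ^ 2 ≤ m * (2*((S+1)/L) + 2*((D+1)*L^2)) :=
      mul_le_mul_of_nonneg_left hBsq hm0
    have hXpos : (0:ℝ) ≤ (S+1)/L := hP.le
    have h4m : 4*m ≤ L := by rw [hLdef]; linarith
    have hmul : (4*m) * ((S+1)/L) ≤ L * ((S+1)/L) :=
      mul_le_mul_of_nonneg_right h4m hXpos
    have hcan : (S+1)/L * L = S+1 := div_mul_cancel₀ _ hL.ne'
    have h2 : m * (2*((S+1)/L)) ≤ (S+1)/2 := by
      rw [le_div_iff₀ (by norm_num : (0:ℝ) < 2)]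
      linarith only [hmul, hcan]
    have h3 : m * (2*((D+1)*L^2)) ≤ 2*M*L^2*(D+1) := by
      have := mul_le_mul_of_nonneg_right hmM
        (show (0:ℝ) ≤ 2*(D+1)*L^2 by positivity)
      linarith only [this]
    have hexp : m * (2*((S+1)/L) + 2*((D+1)*L^2))
        = m * (2*((S+1)/L)) + m * (2*((D+1)*L^2)) := by ring
    rw [hexp] at h1
    linarith only [h1, h2, h3]
  have goal1 : S ≤ C₁ * (1 + D) := by
    have hS2 : S ≤ (S+1)/2 + 2*M*L^2*(D+1) + 2*E := by linarith
    have hS3 : S ≤ 1 + 4*M*L^2*(D+1) + 4*E := by linarith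
    rw [hC1def]
    linarith only [hS3, mul_nonneg hE.le hD0, hD0]
  constructor
  · calc S ≤ C₁ * (1 + D) := goal1
      _ ≤ (C₁ + Real.sqrt (C₁ + 1) + 1) * (1 + D) :=
          mul_le_mul_of_nonneg_right (by linarith) (by linarith)
  · intro x
    set t2 := Real.sqrt (S + 1) with ht2def
    clear_value t2
    have ht2 : 0 < t2 := by rw [ht2def]; exact Real.sqrt_pos.mpr (by linarith)
    have ht2sq : t2 ^ 2 = S + 1 := by rw [ht2def]; exact Real.sq_sqrt (by linarith)
    have h := avg_bound hud hu2 hu'2 (by norm_num : (0:ℝ) < 1) ht2 hs1 x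
    rw [← hSdef, ← hDdef] at h
    have hb2 : S/(2*t2*1) ≤ t2/2 := by
      rw [div_le_div_iff₀ (by positivity) (by norm_num : (0:ℝ) < 2)]
      linarith only [ht2sq, hS0]
    have hux : |u x| ≤ t2 + s1 := by
      simp only [mul_one] at h hb2
      linarith [ha4]
    -- bound t2 and s1 in terms of sqrt D
    have hsd : (0:ℝ) ≤ Real.sqrt D := Real.sqrt_nonneg D
    have hsdsq : Real.sqrt D ^ 2 = D := Real.sq_sqrt hD0
    have h1D : Real.sqrt (1 + D) ≤ 1 + Real.sqrt D := by
      have h7 : 1 + D ≤ (1 + Real.sqrt D)^2 := by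
        have he : (1 + Real.sqrt D)^2 = 1 + 2*Real.sqrt D + Real.sqrt D ^ 2 := by ring
        rw [he, hsdsq]
        linarith only [hsd]
      calc Real.sqrt (1 + D) ≤ Real.sqrt ((1 + Real.sqrt D)^2) := Real.sqrt_le_sqrt h7
        _ = 1 + Real.sqrt D := Real.sqrt_sq (by linarith)
    have hs1le : s1 ≤ 1 + Real.sqrt D := by
      rw [hs1def, show D + 1 = 1 + D by ring]
      exact h1D
    have ht2le : t2 ≤ Real.sqrt (C₁ + 1) * (1 + Real.sqrt D) := by
      have h8 : S + 1 ≤ (C₁ + 1) * (1 + D) := by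
        have hexp : (C₁ + 1) * (1 + D) = C₁ * (1 + D) + 1 + D := by ring
        rw [hexp]
        linarith only [goal1, hD0]
      calc t2 = Real.sqrt (S + 1) := ht2def
        _ ≤ Real.sqrt ((C₁ + 1) * (1 + D)) := Real.sqrt_le_sqrt h8
        _ = Real.sqrt (C₁ + 1) * Real.sqrt (1 + D) := Real.sqrt_mul (by linarith) _
        _ ≤ Real.sqrt (C₁ + 1) * (1 + Real.sqrt D) :=
            mul_le_mul_of_nonneg_left h1D hsqC
    have hfinal : |u x| ≤ (C₁ + Real.sqrt (C₁ + 1) + 1) * (1 + Real.sqrt D) := by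
      calc |u x| ≤ t2 + s1 := hux
        _ ≤ Real.sqrt (C₁ + 1) * (1 + Real.sqrt D) + (1 + Real.sqrt D) := by
            linarith [ht2le, hs1le]
        _ = (Real.sqrt (C₁ + 1) + 1) * (1 + Real.sqrt D) := by ring
        _ ≤ (C₁ + Real.sqrt (C₁ + 1) + 1) * (1 + Real.sqrt D) :=
            mul_le_mul_of_nonneg_right (by linarith) (by linarith)
    rw [show ((1:ℝ)/2) = 1/(2:ℝ) by norm_num, ← Real.sqrt_eq_rpow]
    exact hfinal
end

section
/- Let γ > 1, ρ̄ ≥ 1, E > 0. Suppose ρ : ℝ → [0,∞) and u : ℝ → ℝ are measurable with ∫_ℝ ρ u² dx ≤ E and ∫_ℝ Φ(ρ(x)) dx ≤ E, where Φ(ρ) = (ρ^γ − ρ̄^γ − γ ρ̄^{γ−1}(ρ − ρ̄))/(γ − 1). Then there is a constant C depending only on γ, ρ̄ and E such that ‖√ρ − √ρ̄‖_{L²(ℝ)} ≤ C, and consequently sup_{x∈ℝ} | ∫_{−∞}^{x} √ρ(y) u(y) (√ρ(y) − √ρ̄) dy | ≤ C. -/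
open MeasureTheory

/-- Pointwise inequality: `(√ρ − √ρ̄)² ≤ Φ(ρ)`. -/
lemma sq_sqrt_sub_le_potentialEnergy (γ ρbar ρ : ℝ) (hγ : 1 < γ) (hρbar : 1 ≤ ρbar)
    (hρ : 0 ≤ ρ) :
    (Real.sqrt ρ - Real.sqrt ρbar) ^ 2 ≤ potentialEnergy γ ρbar ρ := by
  have hb0 : (0:ℝ) < ρbar := lt_of_lt_of_le one_pos hρbar
  have hγ1 : (0:ℝ) < γ - 1 := by linarith
  -- the key AM-GM inequality
  have key : (2*γ-1) * (ρ * ρbar ^ (γ-1)) ≤ ρ ^ γ + (2*γ-2) * (Real.sqrt ρ * ρbar ^ (γ-(1:ℝ)/2)) := by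
    rcases eq_or_lt_of_le hρ with h0 | hρ0
    · rw [← h0]
      simp [Real.zero_rpow (lt_trans one_pos hγ).ne']
    · set w₁ : ℝ := 1/(2*γ-1) with hw₁def
      set w₂ : ℝ := (2*γ-2)/(2*γ-1) with hw₂def
      have h2γ : (0:ℝ) < 2*γ-1 := by linarith
      have hw₁ : 0 ≤ w₁ := by positivity
      have hw₂ : 0 ≤ w₂ := by
        apply div_nonneg _ h2γ.le; linarith
      have hww : w₁ + w₂ = 1 := by
        rw [hw₁def, hw₂def, ← add_div, div_eq_one_iff_eq h2γ.ne']; ring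
      have hp₁ : 0 ≤ ρ ^ γ := Real.rpow_nonneg hρ γ
      have hp₂ : 0 ≤ Real.sqrt ρ * ρbar ^ (γ-(1:ℝ)/2) := by positivity
      have amgm := Real.geom_mean_le_arith_mean2_weighted hw₁ hw₂ hp₁ hp₂ hww
      have hL : (ρ ^ γ) ^ w₁ * (Real.sqrt ρ * ρbar ^ (γ-(1:ℝ)/2)) ^ w₂
          = ρ * ρbar ^ (γ-1) := by
        have e1 : γ * w₁ + 1/2 * w₂ = 1 := by
          rw [hw₁def, hw₂def]; field_simp; rw [div_eq_iff (by linarith)]; ring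
        have e2 : (γ - (1:ℝ)/2) * w₂ = γ - 1 := by
          rw [hw₂def]; field_simp; rw [div_eq_iff (by linarith)]; ring
        rw [Real.mul_rpow (Real.sqrt_nonneg _) (Real.rpow_nonneg hb0.le _),
          Real.sqrt_eq_rpow, ← Real.rpow_mul hρ, ← Real.rpow_mul hρ,
          ← Real.rpow_mul hb0.le, ← mul_assoc, ← Real.rpow_add hρ0,
          e1, e2, Real.rpow_one]
      rw [hL] at amgm
      have := mul_le_mul_of_nonneg_left amgm h2γ.le
      calc (2*γ-1) * (ρ * ρbar ^ (γ-1))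
          ≤ (2*γ-1) * (w₁ * (ρ ^ γ) + w₂ * (Real.sqrt ρ * ρbar ^ (γ-(1:ℝ)/2))) := this
        _ = ρ ^ γ + (2*γ-2) * (Real.sqrt ρ * ρbar ^ (γ-(1:ℝ)/2)) := by
            rw [hw₁def, hw₂def]; field_simp; try ring
  -- rewrite everything in terms of s = √ρ, b = √ρbar, B = ρbar^(γ-1), A = ρ^γ
  have hs2 : Real.sqrt ρ ^ 2 = ρ := Real.sq_sqrt hρ
  have hb2 : Real.sqrt ρbar ^ 2 = ρbar := Real.sq_sqrt hb0.le
  have hBg : ρbar ^ γ = ρbar * ρbar ^ (γ-1) := by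
    rw [← Real.rpow_one_add' (by positivity) (by intro h; exact absurd h (by linarith))]
    ring_nf
  have hBh : ρbar ^ (γ-(1:ℝ)/2) = Real.sqrt ρbar * ρbar ^ (γ-1) := by
    rw [Real.sqrt_eq_rpow, ← Real.rpow_add hb0]
    congr 1; ring
  have hB1 : (1:ℝ) ≤ ρbar ^ (γ-1) := Real.one_le_rpow hρbar (by linarith)
  have hsq : (0:ℝ) ≤ (Real.sqrt ρ - Real.sqrt ρbar) ^ 2 := sq_nonneg _
  rw [potentialEnergy, le_div_iff₀ hγ1]
  rw [hBh] at key
  rw [hBg]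
  have h3 : (Real.sqrt ρ - Real.sqrt ρbar) ^ 2 * (γ - 1)
      ≤ (Real.sqrt ρ - Real.sqrt ρbar) ^ 2 * (γ - 1) * ρbar ^ (γ - 1) :=
    le_mul_of_one_le_right (by positivity) hB1
  set s := Real.sqrt ρ with hs
  set b := Real.sqrt ρbar with hb
  set A := ρ ^ γ with hA
  set B := ρbar ^ (γ - 1) with hB
  rw [← hs2] at key ⊢
  rw [← hb2]
  nlinarith [key, h3]

/-- If `∫ ρ u² ≤ E` and `∫ Φ(ρ) ≤ E`, then `‖√ρ − √ρ̄‖_{L²} ≤ C` and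
`sup_x |∫_{−∞}^x √ρ u (√ρ − √ρ̄) dy| ≤ C`, with `C = C(γ, ρ̄, E)`. -/
theorem sqrt_density_bound (γ ρbar E : ℝ) (hγ : 1 < γ) (hρbar : 1 ≤ ρbar)
    (hE : 0 < E) :
    ∃ C : ℝ, 0 < C ∧
      ∀ (ρ u : ℝ → ℝ), Measurable ρ → (∀ x, 0 ≤ ρ x) → Measurable u →
        Integrable (fun x => potentialEnergy γ ρbar (ρ x)) →
        (∫ x : ℝ, potentialEnergy γ ρbar (ρ x)) ≤ E →
        Integrable (fun x => ρ x * u x ^ 2) →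
        (∫ x : ℝ, ρ x * u x ^ 2) ≤ E →
        Integrable (fun y => Real.sqrt (ρ y) * u y * (Real.sqrt (ρ y) - Real.sqrt ρbar)) →
        ((∫ x : ℝ, (Real.sqrt (ρ x) - Real.sqrt ρbar) ^ 2) ^ ((1 : ℝ) / 2) ≤ C) ∧
        (∀ x : ℝ,
          |∫ y in Set.Iic x, Real.sqrt (ρ y) * u y * (Real.sqrt (ρ y) - Real.sqrt ρbar)| ≤ C) := by
  refine ⟨E + Real.sqrt E + 1, by positivity, ?_⟩
  intro ρ u hρm hρ0 hum hΦint hΦE hρuint hρuE hgint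
  -- pointwise bound
  have hpt : ∀ x, (Real.sqrt (ρ x) - Real.sqrt ρbar) ^ 2 ≤ potentialEnergy γ ρbar (ρ x) :=
    fun x => sq_sqrt_sub_le_potentialEnergy γ ρbar (ρ x) hγ hρbar (hρ0 x)
  -- integrability of the square
  have hsqm : Measurable fun x => (Real.sqrt (ρ x) - Real.sqrt ρbar) ^ 2 :=
    ((Real.continuous_sqrt.measurable.comp hρm).sub measurable_const).pow_const 2
  have hsqint : Integrable (fun x => (Real.sqrt (ρ x) - Real.sqrt ρbar) ^ 2) := by
    refine hΦint.mono' hsqm.aestronglyMeasurable (ae_of_all _ fun x => ?_)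
    rw [Real.norm_eq_abs, abs_of_nonneg (sq_nonneg _)]
    exact hpt x
  have hsqE : (∫ x : ℝ, (Real.sqrt (ρ x) - Real.sqrt ρbar) ^ 2) ≤ E :=
    le_trans (integral_mono hsqint hΦint hpt) hΦE
  have hsq0 : (0:ℝ) ≤ ∫ x : ℝ, (Real.sqrt (ρ x) - Real.sqrt ρbar) ^ 2 :=
    integral_nonneg fun x => sq_nonneg _
  constructor
  · have h1 : (∫ x : ℝ, (Real.sqrt (ρ x) - Real.sqrt ρbar) ^ 2) ^ ((1:ℝ)/2)
        ≤ E ^ ((1:ℝ)/2) := Real.rpow_le_rpow hsq0 hsqE (by norm_num)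
    have h2 : E ^ ((1:ℝ)/2) = Real.sqrt E := (Real.sqrt_eq_rpow E).symm
    have := Real.sqrt_nonneg E
    linarith [h1, h2.le, h2.ge]
  · intro x
    set g := fun y => Real.sqrt (ρ y) * u y * (Real.sqrt (ρ y) - Real.sqrt ρbar) with hg
    have habs : Integrable (fun y => |g y|) := hgint.abs
    have hbound : Integrable (fun y => (ρ y * u y ^ 2 + (Real.sqrt (ρ y) - Real.sqrt ρbar) ^ 2) / 2) :=
      (hρuint.add hsqint).div_const 2
    have step1 : |∫ y in Set.Iic x, g y| ≤ ∫ y in Set.Iic x, |g y| := by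
      simpa [Real.norm_eq_abs] using
        norm_integral_le_integral_norm (μ := volume.restrict (Set.Iic x)) g
    have step2 : (∫ y in Set.Iic x, |g y|) ≤ ∫ y : ℝ, |g y| :=
      setIntegral_le_integral habs (ae_of_all _ fun y => abs_nonneg _)
    have step3 : (∫ y : ℝ, |g y|) ≤ ∫ y : ℝ, (ρ y * u y ^ 2 + (Real.sqrt (ρ y) - Real.sqrt ρbar) ^ 2) / 2 := by
      refine integral_mono habs hbound fun y => ?_
      have hs2 : Real.sqrt (ρ y) ^ 2 = ρ y := Real.sq_sqrt (hρ0 y)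
      have h1 : |g y| = (Real.sqrt (ρ y) * |u y|) * |Real.sqrt (ρ y) - Real.sqrt ρbar| := by
        rw [hg]
        rw [abs_mul, abs_mul, abs_of_nonneg (Real.sqrt_nonneg _)]
      rw [h1]
      have h2 : (Real.sqrt (ρ y) * |u y|) ^ 2 = ρ y * u y ^ 2 := by
        rw [mul_pow, hs2, sq_abs]
      nlinarith [sq_nonneg (Real.sqrt (ρ y) * |u y| - |Real.sqrt (ρ y) - Real.sqrt ρbar|),
        sq_abs (Real.sqrt (ρ y) - Real.sqrt ρbar)]
    have step4 : (∫ y : ℝ, (ρ y * u y ^ 2 + (Real.sqrt (ρ y) - Real.sqrt ρbar) ^ 2) / 2)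
        = ((∫ y : ℝ, ρ y * u y ^ 2) + ∫ y : ℝ, (Real.sqrt (ρ y) - Real.sqrt ρbar) ^ 2) / 2 := by
      rw [integral_div, integral_add hρuint hsqint]
    have := Real.sqrt_nonneg E
    linarith [step1, step2, step3, step4.le, step4.ge]
end
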